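/- Suppose there exist symmetric matrices P(k) ≻ 0 in ℝ^{n×n}, k = 0,…,N, such that for k = 0,…,N−1 the quadratic matrix inequality T(k)ᵀ Φ(k) T(k) ≻ 0 holds, where T(k) = [[A_cl(k)ᵀ, C_cl(k)ᵀ], [I_n, 0], [E_cl(k)ᵀ, D_cl(k)ᵀ], [0, I_q]] (a (2n+p+q)×(n+q) block matrix) and Φ(k) = blockdiag([[−P(k), 0], [0, P(k+1)]], [[Q̃_p(k), −S̃_p(k)], [−S̃_p(k)ᵀ, R̃_p(k)]]), and in addition I_q − C(N)P(N)C(N)ᵀ ⪰ 0. Then there exists ε > 0 such that every trajectory of x(k+1) = A_cl(k)x(k) + E_cl(k)w̄(k), z(k) = C_cl(k)x(k) + D_cl(k)w̄(k), z_f = C(N)x(N), with x(0) = 0, satisfies for all disturbance sequences w̄(0),…,w̄(N−1): z_fᵀz_f + Σ_{k=0}^{N−1} [w̄(k); z(k)]ᵀ [[Q_p(k), S_p(k)], [S_p(k)ᵀ, R_p(k)]] [w̄(k); z(k)] + ε·Σ_{k=0}^{N−1} w̄(k)ᵀw̄(k) ≤ 0. -/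

import Mathlib

open Matrix

private lemma continuous_quadform {ι : Type*} [Fintype ι] (M : Matrix ι ι ℝ) :
    Continuous fun v : ι → ℝ => v ⬝ᵥ (M *ᵥ v) := by
  show Continuous fun v : ι → ℝ => ∑ i, v i * ∑ j, M i j * v j
  exact continuous_finset_sum _ fun i _ => (continuous_apply i).mul
    (continuous_finset_sum _ fun j _ => continuous_const.mul (continuous_apply j))

private lemma quadform_smul {ι : Type*} [Fintype ι] (M : Matrix ι ι ℝ) (c : ℝ) (v : ι → ℝ) :
    (c • v) ⬝ᵥ (M *ᵥ (c • v)) = c ^ 2 * (v ⬝ᵥ (M *ᵥ v)) := by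
  simp [Matrix.mulVec_smul, dotProduct_smul, smul_dotProduct, smul_eq_mul]
  ring

private lemma dot_swap {m l : Type*} [Fintype m] [Fintype l]
    (M : Matrix m l ℝ) (u : m → ℝ) (v : l → ℝ) :
    u ⬝ᵥ (M *ᵥ v) = (Mᵀ *ᵥ u) ⬝ᵥ v := by
  rw [Matrix.dotProduct_mulVec, Matrix.mulVec_transpose]

private lemma dot_self_nonneg {m : Type*} [Fintype m] (v : m → ℝ) : 0 ≤ v ⬝ᵥ v :=
  Finset.sum_nonneg fun i _ => mul_self_nonneg _

private lemma quad_margin {ι : Type} [Fintype ι] [DecidableEq ι] (f : (ι → ℝ) → ℝ)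
    (hcont : Continuous f) (hhom : ∀ (c : ℝ) (v : ι → ℝ), f (c • v) = c ^ 2 * f v)
    (hneg : ∀ v : ι → ℝ, v ≠ 0 → f v < 0) :
    ∃ ε : ℝ, 0 < ε ∧ ∀ v : ι → ℝ, f v ≤ -ε * (v ⬝ᵥ v) := by
  have hf0 : f 0 = 0 := by simpa using hhom 0 0
  cases isEmpty_or_nonempty ι with
  | inl h =>
    refine ⟨1, one_pos, fun v => ?_⟩
    have hv : v = 0 := Subsingleton.elim _ _
    simp [hv, hf0, dotProduct]
  | inr h =>
    have hconE : Continuous (fun v : EuclideanSpace ℝ ι => f v) :=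
      hcont.comp (PiLp.continuous_ofLp (p := 2) (β := fun _ : ι => ℝ))
    obtain ⟨i⟩ := h
    have hne : (Metric.sphere (0 : EuclideanSpace ℝ ι) 1).Nonempty :=
      ⟨EuclideanSpace.single i 1, by simp⟩
    obtain ⟨v₀, hv₀, hmax⟩ := (isCompact_sphere (0 : EuclideanSpace ℝ ι) 1).exists_isMaxOn hne
      hconE.continuousOn
    have hv₀n : ‖v₀‖ = 1 := mem_sphere_zero_iff_norm.mp hv₀
    have hv₀0 : v₀ ≠ 0 := by
      intro h0; rw [h0] at hv₀n; simp at hv₀n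
    have hfv₀ : f v₀ < 0 := hneg v₀ (by simpa using hv₀0)
    refine ⟨-f v₀, by linarith, fun v => ?_⟩
    by_cases hv : v = 0
    · simp [hv, hf0, dotProduct]
    · set vE : EuclideanSpace ℝ ι := WithLp.toLp 2 v with hvE
      have hvE0 : vE ≠ 0 := by simpa [hvE] using hv
      have hnorm : ‖vE‖ ≠ 0 := norm_ne_zero_iff.mpr hvE0
      have hmem : ‖vE‖⁻¹ • vE ∈ Metric.sphere (0 : EuclideanSpace ℝ ι) 1 := by
        rw [mem_sphere_zero_iff_norm]
        exact norm_smul_inv_norm (𝕜 := ℝ) hvE0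
      have h1 : f (‖vE‖⁻¹ • vE) ≤ f v₀ := hmax hmem
      have h2 : f v = ‖vE‖ ^ 2 * f (‖vE‖⁻¹ • vE) := by
        have := hhom ‖vE‖ (‖vE‖⁻¹ • vE)
        rw [smul_smul, mul_inv_cancel₀ hnorm, one_smul] at this
        exact this
      have h3 : ‖vE‖ ^ 2 = v ⬝ᵥ v := by
        rw [EuclideanSpace.norm_eq, Real.sq_sqrt (by positivity)]
        simp [dotProduct, Real.norm_eq_abs, sq_abs, sq, hvE]
      have h4 : f v ≤ ‖vE‖ ^ 2 * f v₀ :=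
        h2 ▸ mul_le_mul_of_nonneg_left h1 (sq_nonneg _)
      rw [h3] at h4
      nlinarith [dot_self_nonneg v]

private lemma final_bound {n q : ℕ} (CN : Matrix (Fin q) (Fin n) ℝ)
    (P : Matrix (Fin n) (Fin n) ℝ) (hP : P.PosDef)
    (hfinal : ((1 : Matrix (Fin q) (Fin q) ℝ) - CN * P * CNᵀ).PosSemidef)
    (x : Fin n → ℝ) :
    (CN *ᵥ x) ⬝ᵥ (CN *ᵥ x) ≤ x ⬝ᵥ (P⁻¹ *ᵥ x) := by
  have hPs : Pᵀ = P := by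
    have := hP.isHermitian
    rwa [Matrix.IsHermitian, Matrix.conjTranspose_eq_transpose_of_trivial] at this
  set y : Fin n → ℝ := P⁻¹ *ᵥ x with hy
  have hx : P *ᵥ y = x := by
    rw [hy, Matrix.mulVec_mulVec, Matrix.mul_nonsing_inv _ hP.det_pos.ne'.isUnit,
      Matrix.one_mulVec]
  set c : Fin q → ℝ := CN *ᵥ x with hc
  have h1 : 0 ≤ (CNᵀ *ᵥ c - y) ⬝ᵥ (P *ᵥ (CNᵀ *ᵥ c - y)) := by
    have := hP.posSemidef.dotProduct_mulVec_nonneg (CNᵀ *ᵥ c - y)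
    simpa using this
  have e1 : (CNᵀ *ᵥ c) ⬝ᵥ (P *ᵥ (CNᵀ *ᵥ c)) = c ⬝ᵥ ((CN * P * CNᵀ) *ᵥ c) := by
    rw [← dot_swap CN c, Matrix.mulVec_mulVec, Matrix.mulVec_mulVec]
  have e2 : (CNᵀ *ᵥ c) ⬝ᵥ (P *ᵥ y) = c ⬝ᵥ c := by
    rw [← dot_swap CN c, hx, ← hc]
  have e3 : y ⬝ᵥ (P *ᵥ (CNᵀ *ᵥ c)) = c ⬝ᵥ c := by
    rw [dot_swap, hPs, hx, dot_swap, Matrix.transpose_transpose, ← hc]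
  have h2 : c ⬝ᵥ ((CN * P * CNᵀ) *ᵥ c) ≤ c ⬝ᵥ c := by
    have := hfinal.dotProduct_mulVec_nonneg c
    simp only [Matrix.sub_mulVec, Matrix.one_mulVec, dotProduct_sub, star_trivial] at this
    linarith
  have hexp : (CNᵀ *ᵥ c - y) ⬝ᵥ (P *ᵥ (CNᵀ *ᵥ c - y)) =
      c ⬝ᵥ ((CN * P * CNᵀ) *ᵥ c) - c ⬝ᵥ c - c ⬝ᵥ c + y ⬝ᵥ (P *ᵥ y) := by
    simp only [Matrix.mulVec_sub, sub_dotProduct, dotProduct_sub, e1, e2, e3]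
    ring
  have e4 : y ⬝ᵥ (P *ᵥ y) = x ⬝ᵥ (P⁻¹ *ᵥ x) := by
    rw [hx, dotProduct_comm]
  rw [hexp, e4] at h1
  linarith

private lemma symm_of_posdef {n : ℕ} {P : Matrix (Fin n) (Fin n) ℝ} (hP : P.PosDef) :
    Pᵀ = P := by
  have := hP.isHermitian
  rwa [Matrix.IsHermitian, Matrix.conjTranspose_eq_transpose_of_trivial] at this

private lemma dual_step {n p q : ℕ}
    (A : Matrix (Fin n) (Fin n) ℝ) (E : Matrix (Fin n) (Fin p) ℝ)
    (C : Matrix (Fin q) (Fin n) ℝ) (D : Matrix (Fin q) (Fin p) ℝ)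
    (Q : Matrix (Fin p) (Fin p) ℝ) (S : Matrix (Fin p) (Fin q) ℝ)
    (R : Matrix (Fin q) (Fin q) ℝ)
    (Qt : Matrix (Fin p) (Fin p) ℝ) (St : Matrix (Fin p) (Fin q) ℝ)
    (Rt : Matrix (Fin q) (Fin q) ℝ)
    (hQs : Q.IsSymm) (hRs : R.IsSymm) (hQt : (-Qt).PosDef)
    (hinv : fromBlocks Q S Sᵀ R * fromBlocks Qt St Stᵀ Rt = 1)
    (P P₁ : Matrix (Fin n) (Fin n) ℝ) (hP : P.PosDef) (hP₁ : P₁.PosDef)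
    (hQMI : ((fromRows
          (fromRows (fromCols Aᵀ Cᵀ)
            (fromCols (1 : Matrix (Fin n) (Fin n) ℝ) (0 : Matrix (Fin n) (Fin q) ℝ)))
          (fromRows (fromCols Eᵀ Dᵀ)
            (fromCols (0 : Matrix (Fin q) (Fin n) ℝ) (1 : Matrix (Fin q) (Fin q) ℝ))))ᵀ *
        fromBlocks (fromBlocks (-P) 0 0 P₁) 0 0 (fromBlocks Qt (-St) (-Stᵀ) Rt) *
        (fromRows
          (fromRows (fromCols Aᵀ Cᵀ)
            (fromCols (1 : Matrix (Fin n) (Fin n) ℝ) (0 : Matrix (Fin n) (Fin q) ℝ)))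
          (fromRows (fromCols Eᵀ Dᵀ)
            (fromCols (0 : Matrix (Fin q) (Fin n) ℝ)
              (1 : Matrix (Fin q) (Fin q) ℝ))))).PosDef) :
    ∃ ε : ℝ, 0 < ε ∧ ∀ (x : Fin n → ℝ) (w : Fin p → ℝ),
      (Sum.elim w (C *ᵥ x + D *ᵥ w)) ⬝ᵥ
          ((fromBlocks Q S Sᵀ R) *ᵥ (Sum.elim w (C *ᵥ x + D *ᵥ w))) + ε * (w ⬝ᵥ w)
        ≤ x ⬝ᵥ (P⁻¹ *ᵥ x) - (A *ᵥ x + E *ᵥ w) ⬝ᵥ (P₁⁻¹ *ᵥ (A *ᵥ x + E *ᵥ w)) := by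
  -- abbreviations
  set Pim : Matrix (Fin p ⊕ Fin q) (Fin p ⊕ Fin q) ℝ := fromBlocks Q S Sᵀ R with hPim
  set Th : Matrix (Fin p ⊕ Fin q) (Fin p ⊕ Fin q) ℝ := fromBlocks Qt St Stᵀ Rt with hTh
  have hPiTh : Pim * Th = 1 := hinv
  have hThPi : Th * Pim = 1 := mul_eq_one_comm.mp hinv
  have hPs : Pᵀ = P := symm_of_posdef hP
  have hP₁s : P₁ᵀ = P₁ := symm_of_posdef hP₁
  have hXP : P⁻¹ * P = 1 := Matrix.nonsing_inv_mul _ hP.det_pos.ne'.isUnit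
  have hX₁P₁ : P₁⁻¹ * P₁ = 1 := Matrix.nonsing_inv_mul _ hP₁.det_pos.ne'.isUnit
  have hXs : (P⁻¹)ᵀ = P⁻¹ := symm_of_posdef hP.inv
  have hX₁s : (P₁⁻¹)ᵀ = P₁⁻¹ := symm_of_posdef hP₁.inv
  have hPis : Pimᵀ = Pim := by
    rw [hPim, Matrix.fromBlocks_transpose, hQs.eq, hRs.eq, Matrix.transpose_transpose]
  have hThs : Thᵀ = Th := by
    have h1 : Thᵀ * Pim = 1 := by
      calc Thᵀ * Pim = (Pimᵀ * Th)ᵀ := by rw [Matrix.transpose_mul, Matrix.transpose_transpose]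
      _ = 1 := by rw [hPis, hPiTh, Matrix.transpose_one]
    calc Thᵀ = Thᵀ * (Pim * Th) := by rw [hPiTh, mul_one]
    _ = (Thᵀ * Pim) * Th := by rw [mul_assoc]
    _ = Th := by rw [h1, one_mul]
  have hQts : Qtᵀ = Qt := by
    have := symm_of_posdef hQt
    simpa using this
  have hRts : Rtᵀ = Rt := by
    have h2 := hThs
    rw [hTh] at h2
    have h3 := congrArg Matrix.toBlocks₂₂ h2
    simpa [Matrix.fromBlocks_transpose, Matrix.toBlocks_fromBlocks₂₂] using h3
  classical
  -- the big matrices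
  set Tm : Matrix ((Fin n ⊕ Fin n) ⊕ (Fin p ⊕ Fin q)) (Fin n ⊕ Fin q) ℝ :=
      fromRows
        (fromRows (fromCols Aᵀ Cᵀ)
          (fromCols (1 : Matrix (Fin n) (Fin n) ℝ) (0 : Matrix (Fin n) (Fin q) ℝ)))
        (fromRows (fromCols Eᵀ Dᵀ)
          (fromCols (0 : Matrix (Fin q) (Fin n) ℝ) (1 : Matrix (Fin q) (Fin q) ℝ)))
      with hTm
  set Phm : Matrix ((Fin n ⊕ Fin n) ⊕ (Fin p ⊕ Fin q)) ((Fin n ⊕ Fin n) ⊕ (Fin p ⊕ Fin q)) ℝ :=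
      fromBlocks (fromBlocks (-P) 0 0 P₁) 0 0 (fromBlocks Qt (-St) (-Stᵀ) Rt) with hPhm
  set Psi : Matrix ((Fin n ⊕ Fin n) ⊕ (Fin p ⊕ Fin q)) ((Fin n ⊕ Fin n) ⊕ (Fin p ⊕ Fin q)) ℝ :=
      fromBlocks (fromBlocks (-(P⁻¹)) 0 0 (P₁⁻¹)) 0 0 Pim with hPsi
  have hPsis : Psiᵀ = Psi := by
    rw [hPsi]
    simp [Matrix.fromBlocks_transpose, hXs, hX₁s, hPis]
  set Wm : Matrix ((Fin n ⊕ Fin n) ⊕ (Fin p ⊕ Fin q)) (Fin n ⊕ Fin q) ℝ :=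
      fromRows (fromRows (P * fromCols Aᵀ Cᵀ) (fromCols P₁ 0))
        (Th * fromRows (-(fromCols Eᵀ Dᵀ))
          (fromCols (0 : Matrix (Fin q) (Fin n) ℝ) (1 : Matrix (Fin q) (Fin q) ℝ))) with hWm
  set Nm : Matrix ((Fin n ⊕ Fin n) ⊕ (Fin p ⊕ Fin q)) (Fin n ⊕ Fin p) ℝ :=
      fromRows (fromRows (fromCols (1 : Matrix (Fin n) (Fin n) ℝ) (0 : Matrix (Fin n) (Fin p) ℝ)) 0)
        (Th * fromRows (fromCols (0 : Matrix (Fin p) (Fin n) ℝ) (1 : Matrix (Fin p) (Fin p) ℝ)) 0) with hNm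
  set Gm : Matrix ((Fin n ⊕ Fin n) ⊕ (Fin p ⊕ Fin q)) (Fin n ⊕ Fin p) ℝ :=
      fromRows (fromRows (fromCols (1 : Matrix (Fin n) (Fin n) ℝ) (0 : Matrix (Fin n) (Fin p) ℝ))
          (fromCols A E))
        (fromRows (fromCols (0 : Matrix (Fin p) (Fin n) ℝ) (1 : Matrix (Fin p) (Fin p) ℝ))
          (fromCols C D)) with hGm
  -- actions on vectors
  have hWact : ∀ (ξ : Fin n → ℝ) (η : Fin q → ℝ), Wm *ᵥ Sum.elim ξ η =
      Sum.elim (Sum.elim (P *ᵥ (Aᵀ *ᵥ ξ + Cᵀ *ᵥ η)) (P₁ *ᵥ ξ))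
        (Th *ᵥ Sum.elim (-(Eᵀ *ᵥ ξ + Dᵀ *ᵥ η)) η) := by
    intro ξ η
    rw [hWm]
    simp [Matrix.fromRows_mulVec, Matrix.fromCols_mulVec_sumElim, ← Matrix.mulVec_mulVec,
      Matrix.neg_mulVec, Matrix.one_mulVec, Matrix.zero_mulVec, Matrix.fromBlocks_mulVec, Matrix.mulVec_add, Matrix.add_mulVec, Matrix.mulVec_neg,
      Matrix.mulVec_zero, add_comm]
  have hPsiW : ∀ (ξ : Fin n → ℝ) (η : Fin q → ℝ), Psi *ᵥ (Wm *ᵥ Sum.elim ξ η) =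
      Sum.elim (Sum.elim (-(Aᵀ *ᵥ ξ + Cᵀ *ᵥ η)) ξ) (Sum.elim (-(Eᵀ *ᵥ ξ + Dᵀ *ᵥ η)) η) := by
    intro ξ η
    rw [hWact, hPsi]
    simp [Matrix.fromBlocks_mulVec, Matrix.neg_mulVec, Matrix.mulVec_mulVec, hXP, hX₁P₁,
      ← Matrix.mul_assoc, Matrix.one_mul, hPiTh, Matrix.one_mulVec, Matrix.zero_mulVec, Matrix.mulVec_zero, Matrix.fromBlocks_mulVec, Matrix.mulVec_add, Matrix.add_mulVec, Matrix.mulVec_neg,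
      Matrix.mulVec_zero, add_comm]
    
  have hNact : ∀ (a : Fin n → ℝ) (u : Fin p → ℝ), Nm *ᵥ Sum.elim a u =
      Sum.elim (Sum.elim a 0) (Th *ᵥ Sum.elim u 0) := by
    intro a u
    rw [hNm]
    erw [Matrix.fromRows_mulVec, ← Matrix.mulVec_mulVec]
    simp [Matrix.fromRows_mulVec, Matrix.fromCols_mulVec_sumElim, ← Matrix.mulVec_mulVec,
      Matrix.one_mulVec, Matrix.zero_mulVec, Matrix.fromBlocks_mulVec, Matrix.mulVec_add, Matrix.add_mulVec, Matrix.mulVec_neg,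
      Matrix.mulVec_zero, add_comm]
  have hGact : ∀ (x : Fin n → ℝ) (w : Fin p → ℝ), Gm *ᵥ Sum.elim x w =
      Sum.elim (Sum.elim x (A *ᵥ x + E *ᵥ w)) (Sum.elim w (C *ᵥ x + D *ᵥ w)) := by
    intro x w
    rw [hGm]
    simp [Matrix.fromRows_mulVec, Matrix.fromCols_mulVec_sumElim,
      Matrix.one_mulVec, Matrix.zero_mulVec, Matrix.fromBlocks_mulVec, Matrix.mulVec_add, Matrix.add_mulVec, Matrix.mulVec_neg,
      Matrix.mulVec_zero, add_comm]
  -- quadratic form of Wm equals the QMI form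
  have hfact : ∀ (ξ : Fin n → ℝ) (η : Fin q → ℝ),
      (Wm *ᵥ Sum.elim ξ η) ⬝ᵥ (Psi *ᵥ (Wm *ᵥ Sum.elim ξ η)) =
        Sum.elim ξ η ⬝ᵥ ((Tmᵀ * Phm * Tm) *ᵥ Sum.elim ξ η) := by
    intro ξ η
    have e1 : (Tmᵀ * Phm * Tm) *ᵥ Sum.elim ξ η = Tmᵀ *ᵥ (Phm *ᵥ (Tm *ᵥ Sum.elim ξ η)) := by
      rw [Matrix.mulVec_mulVec, Matrix.mulVec_mulVec]
    have e2 : Tm *ᵥ Sum.elim ξ η =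
        Sum.elim (Sum.elim (Aᵀ *ᵥ ξ + Cᵀ *ᵥ η) ξ) (Sum.elim (Eᵀ *ᵥ ξ + Dᵀ *ᵥ η) η) := by
      rw [hTm]
      simp [Matrix.fromRows_mulVec, Matrix.fromCols_mulVec_sumElim,
        Matrix.one_mulVec, Matrix.zero_mulVec, Matrix.fromBlocks_mulVec, Matrix.mulVec_add]
    rw [hPsiW, hWact, e1, dot_swap, Matrix.transpose_transpose, e2, hPhm, hTh]
    generalize Aᵀ *ᵥ ξ + Cᵀ *ᵥ η = v₁
    generalize Eᵀ *ᵥ ξ + Dᵀ *ᵥ η = u₀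
    simp only [Matrix.fromBlocks_mulVec, sumElim_dotProduct_sumElim,
      Matrix.neg_mulVec, Matrix.mulVec_neg, dotProduct_neg, neg_dotProduct,
      dotProduct_add, add_dotProduct, Matrix.zero_mulVec, Matrix.mulVec_zero,
      dotProduct_zero, zero_dotProduct, add_zero, zero_add, dot_swap,
      Matrix.transpose_transpose, hPs, hP₁s, hQts, hRts, Sum.elim_comp_inl, Sum.elim_comp_inr]
    ring
  -- translated QMI
  have hQMI' : ∀ y : (Fin n ⊕ Fin q) → ℝ, y ≠ 0 →
      0 < (Wm *ᵥ y) ⬝ᵥ (Psi *ᵥ (Wm *ᵥ y)) := by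
    intro y hy
    have hb := hQMI.dotProduct_mulVec_pos hy
    rw [star_trivial] at hb
    have h2 := hfact (y ∘ Sum.inl) (y ∘ Sum.inr)
    rw [Sum.elim_comp_inl_inr] at h2
    rw [h2]
    exact hb
  -- quadratic form of Nm
  have hqfN : ∀ (a : Fin n → ℝ) (u : Fin p → ℝ),
      (Nm *ᵥ Sum.elim a u) ⬝ᵥ (Psi *ᵥ (Nm *ᵥ Sum.elim a u)) =
        -(a ⬝ᵥ (P⁻¹ *ᵥ a)) + u ⬝ᵥ (Qt *ᵥ u) := by
    intro a u
    have e3 : Pim *ᵥ (Th *ᵥ Sum.elim u 0) = Sum.elim u 0 := by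
      rw [Matrix.mulVec_mulVec, hPiTh, Matrix.one_mulVec]
    rw [hNact, hPsi]
    simp only [Matrix.fromBlocks_mulVec, Sum.elim_comp_inl, Sum.elim_comp_inr,
      Matrix.zero_mulVec, Matrix.mulVec_zero, add_zero, zero_add, Matrix.neg_mulVec, e3]
    simp only [sumElim_dotProduct_sumElim, hTh, Matrix.fromBlocks_mulVec,
      Sum.elim_comp_inl, Sum.elim_comp_inr, Matrix.mulVec_zero, add_zero,
      dotProduct_zero, zero_dotProduct, dotProduct_neg,
      dot_swap, hQts, hXs, Matrix.transpose_transpose]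

  have hqfNneg : ∀ (a : Fin n → ℝ) (u : Fin p → ℝ), ¬(a = 0 ∧ u = 0) →
      (Nm *ᵥ Sum.elim a u) ⬝ᵥ (Psi *ᵥ (Nm *ᵥ Sum.elim a u)) < 0 := by
    intro a u hau
    rw [hqfN]
    have h1 : 0 ≤ a ⬝ᵥ (P⁻¹ *ᵥ a) := by
      have := hP.inv.posSemidef.dotProduct_mulVec_nonneg a
      simpa using this
    have h2 : 0 ≤ -(u ⬝ᵥ (Qt *ᵥ u)) := by
      have := hQt.posSemidef.dotProduct_mulVec_nonneg u
      simpa [Matrix.neg_mulVec, dotProduct_neg] using this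
    rcases not_and_or.mp hau with ha | hu
    · have := hP.inv.dotProduct_mulVec_pos ha
      simp only [star_trivial] at this
      linarith
    · have := hQt.dotProduct_mulVec_pos hu
      simp only [star_trivial, Matrix.neg_mulVec, dotProduct_neg] at this
      linarith
  -- injectivity of Wm and Nm as linear maps
  have hWker : ∀ y : (Fin n ⊕ Fin q) → ℝ, Wm *ᵥ y = 0 → y = 0 := by
    intro y hy
    by_contra h
    have := hQMI' y h
    rw [hy] at this
    simp at this
  have hNker : ∀ y : (Fin n ⊕ Fin p) → ℝ, Nm *ᵥ y = 0 → y = 0 := by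
    intro y hy
    by_contra h
    have hcomp : ¬(y ∘ Sum.inl = 0 ∧ y ∘ Sum.inr = 0) := by
      rintro ⟨h1, h2⟩
      apply h
      funext i
      cases i with
      | inl i => exact congrFun h1 i
      | inr i => exact congrFun h2 i
    have hlt := hqfNneg (y ∘ Sum.inl) (y ∘ Sum.inr) hcomp
    rw [Sum.elim_comp_inl_inr, hy] at hlt
    simp at hlt
  -- key positivity/negativity: the primal strict inequality
  have key1 : ∀ (x : Fin n → ℝ) (w : Fin p → ℝ), ¬(x = 0 ∧ w = 0) →
      (Gm *ᵥ Sum.elim x w) ⬝ᵥ (Psi *ᵥ (Gm *ᵥ Sum.elim x w)) < 0 := by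
    intro x w hxw
    by_contra hcon
    push_neg at hcon
    set g : ((Fin n ⊕ Fin n) ⊕ (Fin p ⊕ Fin q)) → ℝ := Gm *ᵥ Sum.elim x w with hg
    have hg0 : g ≠ 0 := by
      intro h0
      apply hxw
      rw [hg, hGact] at h0
      constructor
      · funext i; exact congrFun h0 (Sum.inl (Sum.inl i))
      · funext i; exact congrFun h0 (Sum.inr (Sum.inl i))
    -- orthogonality of g with Psi • range(Wm)
    have horth : ∀ y : (Fin n ⊕ Fin q) → ℝ, g ⬝ᵥ (Psi *ᵥ (Wm *ᵥ y)) = 0 := by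
      intro y
      rw [← Sum.elim_comp_inl_inr y, hPsiW, hg, hGact]
      simp only [sumElim_dotProduct_sumElim, dotProduct_neg,
        dotProduct_add, add_dotProduct, neg_dotProduct,
        Matrix.mulVec_add, Matrix.mulVec_neg, dot_swap, Matrix.transpose_transpose]
      ring
    have hgnr : ∀ y : (Fin n ⊕ Fin q) → ℝ, g ≠ Wm *ᵥ y := by
      intro y hy
      by_cases hy0 : y = 0
      · rw [hy0] at hy
        simp only [Matrix.mulVec_zero] at hy
        exact hg0 hy
      · have h1 := hQMI' y hy0
        rw [← hy] at h1
        have h2 := horth y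
        rw [← hy] at h2
        linarith
    classical
    have hWinj : Function.Injective Wm.mulVecLin :=
      LinearMap.ker_eq_bot.mp (LinearMap.ker_eq_bot'.mpr fun y hy => hWker y hy)
    have hNinj : Function.Injective Nm.mulVecLin :=
      LinearMap.ker_eq_bot.mp (LinearMap.ker_eq_bot'.mpr fun y hy => hNker y hy)
    set SpanG := Submodule.span ℝ {g} with hSpanG
    set RW := LinearMap.range Wm.mulVecLin with hRW
    set RN := LinearMap.range Nm.mulVecLin with hRN
    have hdisj : SpanG ⊓ RW = ⊥ := by
      rw [eq_bot_iff]
      rintro v ⟨hv1, hv2⟩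
      obtain ⟨c, rfl⟩ := Submodule.mem_span_singleton.mp hv1
      obtain ⟨y, hy⟩ := hv2
      by_cases hc : c = 0
      · simp [hc]
      · exfalso
        apply hgnr (c⁻¹ • y)
        have : Wm.mulVecLin (c⁻¹ • y) = g := by
          rw [LinearMap.map_smul, hy, smul_smul, inv_mul_cancel₀ hc, one_smul]
        rw [← this]
        rfl
    have hrankW : Module.finrank ℝ RW = n + q := by
      rw [hRW, LinearMap.finrank_range_of_inj hWinj, Module.finrank_fintype_fun_eq_card]
      simp
    have hrankN : Module.finrank ℝ RN = n + p := by
      rw [hRN, LinearMap.finrank_range_of_inj hNinj, Module.finrank_fintype_fun_eq_card]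
      simp
    have hrankG : Module.finrank ℝ SpanG = 1 := finrank_span_singleton hg0
    have hrankS : Module.finrank ℝ ↥(SpanG ⊔ RW) = 1 + (n + q) := by
      have := Submodule.finrank_sup_add_finrank_inf_eq SpanG RW
      rw [hdisj] at this
      rw [finrank_bot] at this
      omega
    have htot : Module.finrank ℝ (((Fin n ⊕ Fin n) ⊕ (Fin p ⊕ Fin q)) → ℝ) = n + n + p + q := by
      rw [Module.finrank_fintype_fun_eq_card]
      simp
      omega
    have hsup := Submodule.finrank_sup_add_finrank_inf_eq (SpanG ⊔ RW) RN
    have hle : Module.finrank ℝ ↥((SpanG ⊔ RW) ⊔ RN) ≤ n + n + p + q := by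
      rw [← htot]
      exact Submodule.finrank_le _
    have hpos : 0 < Module.finrank ℝ ↥((SpanG ⊔ RW) ⊓ RN) := by omega
    have hnebot : (SpanG ⊔ RW) ⊓ RN ≠ ⊥ := by
      intro hbot
      rw [hbot, finrank_bot] at hpos
      omega
    obtain ⟨v, hvmem, hv0⟩ := Submodule.exists_mem_ne_zero_of_ne_bot hnebot
    have hvS : v ∈ SpanG ⊔ RW := hvmem.1
    have hvN : v ∈ RN := hvmem.2
    -- from membership in RN : qf v < 0
    obtain ⟨yn, hyn⟩ := hvN
    have hyn0 : yn ≠ 0 := by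
      intro h0
      apply hv0
      rw [← hyn, h0, map_zero]
    have hyncomp : ¬(yn ∘ Sum.inl = 0 ∧ yn ∘ Sum.inr = 0) := by
      rintro ⟨h1, h2⟩
      apply hyn0
      funext i
      cases i with
      | inl i => exact congrFun h1 i
      | inr i => exact congrFun h2 i
    have hneg : v ⬝ᵥ (Psi *ᵥ v) < 0 := by
      have := hqfNneg (yn ∘ Sum.inl) (yn ∘ Sum.inr) hyncomp
      rw [Sum.elim_comp_inl_inr] at this
      rw [← hyn]
      exact this
    -- from membership in sup : qf v ≥ 0
    obtain ⟨s, hs, t, ht, hst⟩ := Submodule.mem_sup.mp hvS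
    obtain ⟨c, rfl⟩ := Submodule.mem_span_singleton.mp hs
    obtain ⟨yw, hyw⟩ := ht
    have ht' : t = Wm *ᵥ yw := by rw [← hyw]; rfl
    have hqft : 0 ≤ t ⬝ᵥ (Psi *ᵥ t) := by
      by_cases hyw0 : yw = 0
      · rw [ht', hyw0]
        simp
      · rw [ht']
        exact le_of_lt (hQMI' yw hyw0)
    have horth_t : g ⬝ᵥ (Psi *ᵥ t) = 0 := by
      rw [ht']
      exact horth yw
    have horth_t' : t ⬝ᵥ (Psi *ᵥ g) = 0 := by
      rw [dot_swap, hPsis, dotProduct_comm]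
      exact horth_t
    have hexp : (c • g + t) ⬝ᵥ (Psi *ᵥ (c • g + t)) =
        c * c * (g ⬝ᵥ (Psi *ᵥ g)) + c * (g ⬝ᵥ (Psi *ᵥ t)) + c * (t ⬝ᵥ (Psi *ᵥ g))
          + t ⬝ᵥ (Psi *ᵥ t) := by
      simp only [Matrix.mulVec_add, Matrix.mulVec_smul, dotProduct_add,
        add_dotProduct, dotProduct_smul, smul_dotProduct, smul_eq_mul]
      ring
    have hpos' : 0 ≤ v ⬝ᵥ (Psi *ᵥ v) := by
      rw [← hst, hexp, horth_t, horth_t']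
      have h1 : 0 ≤ c * c * (g ⬝ᵥ (Psi *ᵥ g)) := mul_nonneg (mul_self_nonneg c) hcon
      linarith
    linarith
  -- quadratic margin
  set Mq : Matrix (Fin n ⊕ Fin p) (Fin n ⊕ Fin p) ℝ := Gmᵀ * Psi * Gm with hMq
  have hfq : ∀ v : (Fin n ⊕ Fin p) → ℝ, v ⬝ᵥ (Mq *ᵥ v) = (Gm *ᵥ v) ⬝ᵥ (Psi *ᵥ (Gm *ᵥ v)) := by
    intro v
    rw [hMq]
    rw [show (Gmᵀ * Psi * Gm) *ᵥ v = Gmᵀ *ᵥ (Psi *ᵥ (Gm *ᵥ v)) from by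
      rw [Matrix.mulVec_mulVec, Matrix.mulVec_mulVec]]
    rw [dot_swap, Matrix.transpose_transpose]
  have hmargin := quad_margin (fun v => v ⬝ᵥ (Mq *ᵥ v)) (continuous_quadform Mq)
      (fun c v => quadform_smul Mq c v)
      (fun v hv => by
        show v ⬝ᵥ (Mq *ᵥ v) < 0
        rw [hfq]
        have hcomp : ¬(v ∘ Sum.inl = 0 ∧ v ∘ Sum.inr = 0) := by
          rintro ⟨h1, h2⟩
          apply hv
          funext i
          cases i with
          | inl i => exact congrFun h1 i
          | inr i => exact congrFun h2 i
        have := key1 (v ∘ Sum.inl) (v ∘ Sum.inr) hcomp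
        rwa [Sum.elim_comp_inl_inr] at this)
  obtain ⟨ε, hε, hbound⟩ := hmargin
  refine ⟨ε, hε, fun x w => ?_⟩
  have h1 : (Sum.elim x w) ⬝ᵥ (Mq *ᵥ (Sum.elim x w)) ≤
      -ε * ((Sum.elim x w) ⬝ᵥ (Sum.elim x w)) := hbound (Sum.elim x w)
  rw [hfq, hGact] at h1
  have h2 : (Sum.elim (Sum.elim x (A *ᵥ x + E *ᵥ w)) (Sum.elim w (C *ᵥ x + D *ᵥ w))) ⬝ᵥ
      (Psi *ᵥ (Sum.elim (Sum.elim x (A *ᵥ x + E *ᵥ w)) (Sum.elim w (C *ᵥ x + D *ᵥ w)))) =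
      -(x ⬝ᵥ (P⁻¹ *ᵥ x)) + (A *ᵥ x + E *ᵥ w) ⬝ᵥ (P₁⁻¹ *ᵥ (A *ᵥ x + E *ᵥ w))
        + (Sum.elim w (C *ᵥ x + D *ᵥ w)) ⬝ᵥ (Pim *ᵥ (Sum.elim w (C *ᵥ x + D *ᵥ w))) := by
    rw [hPsi]
    simp only [Matrix.fromBlocks_mulVec, Sum.elim_comp_inl, Sum.elim_comp_inr,
      Matrix.zero_mulVec, add_zero, zero_add, Matrix.mulVec_zero,
      sumElim_dotProduct_sumElim, Matrix.neg_mulVec, dotProduct_neg]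
  rw [h2] at h1
  have h3 : (Sum.elim x w) ⬝ᵥ (Sum.elim x w) = x ⬝ᵥ x + w ⬝ᵥ w :=
    sumElim_dotProduct_sumElim x x w w
  rw [h3] at h1
  have h4 : 0 ≤ ε * (x ⬝ᵥ x) := mul_nonneg hε.le (dot_self_nonneg x)
  nlinarith [h1, h4]

/-- Finite-horizon robust quadratic performance via a quadratic
matrix inequality (Lemma 3 of the paper). `Qpt`, `Spt`, `Rpt` are the blocks of
the inverse of the performance index `Π(k) = [[Qp(k), Sp(k)], [Sp(k)ᵀ, Rp(k)]]`. -/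
theorem finite_horizon_robust_performance
    {n p q N : ℕ}
    (Acl : ℕ → Matrix (Fin n) (Fin n) ℝ) (Ecl : ℕ → Matrix (Fin n) (Fin p) ℝ)
    (Ccl : ℕ → Matrix (Fin q) (Fin n) ℝ) (Dcl : ℕ → Matrix (Fin q) (Fin p) ℝ)
    (CN : Matrix (Fin q) (Fin n) ℝ)
    (Qp : ℕ → Matrix (Fin p) (Fin p) ℝ) (Sp : ℕ → Matrix (Fin p) (Fin q) ℝ)
    (Rp : ℕ → Matrix (Fin q) (Fin q) ℝ)
    (Qpt : ℕ → Matrix (Fin p) (Fin p) ℝ) (Spt : ℕ → Matrix (Fin p) (Fin q) ℝ)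
    (Rpt : ℕ → Matrix (Fin q) (Fin q) ℝ)
    (hQpSymm : ∀ k, (Qp k).IsSymm) (hRpSymm : ∀ k, (Rp k).IsSymm)
    (hRpPSD : ∀ k, (Rp k).PosSemidef)
    (hQptND : ∀ k, (-(Qpt k)).PosDef)
    -- the tilded matrices form the inverse of the performance index:
    (hinv : ∀ k,
      Matrix.fromBlocks (Qp k) (Sp k) ((Sp k)ᵀ) (Rp k) *
        Matrix.fromBlocks (Qpt k) (Spt k) ((Spt k)ᵀ) (Rpt k) = 1)
    (P : ℕ → Matrix (Fin n) (Fin n) ℝ)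
    (hP : ∀ k ≤ N, (P k).PosDef)
    -- the quadratic matrix inequality T(k)ᵀ Φ(k) T(k) ≻ 0:
    (hQMI : ∀ k < N,
      ((Matrix.fromRows
          (Matrix.fromRows
            (Matrix.fromCols ((Acl k)ᵀ) ((Ccl k)ᵀ))
            (Matrix.fromCols (1 : Matrix (Fin n) (Fin n) ℝ)
              (0 : Matrix (Fin n) (Fin q) ℝ)))
          (Matrix.fromRows
            (Matrix.fromCols ((Ecl k)ᵀ) ((Dcl k)ᵀ))
            (Matrix.fromCols (0 : Matrix (Fin q) (Fin n) ℝ)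
              (1 : Matrix (Fin q) (Fin q) ℝ))))ᵀ *
        Matrix.fromBlocks
          (Matrix.fromBlocks (-(P k)) 0 0 (P (k + 1))) 0 0
          (Matrix.fromBlocks (Qpt k) (-(Spt k)) (-((Spt k)ᵀ)) (Rpt k)) *
        (Matrix.fromRows
          (Matrix.fromRows
            (Matrix.fromCols ((Acl k)ᵀ) ((Ccl k)ᵀ))
            (Matrix.fromCols (1 : Matrix (Fin n) (Fin n) ℝ)
              (0 : Matrix (Fin n) (Fin q) ℝ)))
          (Matrix.fromRows
            (Matrix.fromCols ((Ecl k)ᵀ) ((Dcl k)ᵀ))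
            (Matrix.fromCols (0 : Matrix (Fin q) (Fin n) ℝ)
              (1 : Matrix (Fin q) (Fin q) ℝ))))).PosDef)
    -- the final-time condition I_q − C(N) P(N) C(N)ᵀ ⪰ 0:
    (hfinal : ((1 : Matrix (Fin q) (Fin q) ℝ) - CN * P N * CNᵀ).PosSemidef) :
    ∃ ε : ℝ, 0 < ε ∧
      ∀ (w : ℕ → Fin p → ℝ) (x : ℕ → Fin n → ℝ) (z : ℕ → Fin q → ℝ),
        x 0 = 0 →
        (∀ k < N, x (k + 1) = (Acl k).mulVec (x k) + (Ecl k).mulVec (w k)) →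
        (∀ k < N, z k = (Ccl k).mulVec (x k) + (Dcl k).mulVec (w k)) →
        (CN.mulVec (x N)) ⬝ᵥ (CN.mulVec (x N))
          + (∑ k ∈ Finset.range N,
              (Sum.elim (w k) (z k)) ⬝ᵥ
                ((Matrix.fromBlocks (Qp k) (Sp k) ((Sp k)ᵀ) (Rp k)).mulVec
                  (Sum.elim (w k) (z k))))
          + ε * ∑ k ∈ Finset.range N, (w k) ⬝ᵥ (w k) ≤ 0 := by
  have key : ∀ k, k < N → ∃ ε : ℝ, 0 < ε ∧ ∀ (xv : Fin n → ℝ) (wv : Fin p → ℝ),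
      (Sum.elim wv (Ccl k *ᵥ xv + Dcl k *ᵥ wv)) ⬝ᵥ
          ((fromBlocks (Qp k) (Sp k) ((Sp k)ᵀ) (Rp k)) *ᵥ
            (Sum.elim wv (Ccl k *ᵥ xv + Dcl k *ᵥ wv)))
          + ε * (wv ⬝ᵥ wv)
        ≤ xv ⬝ᵥ ((P k)⁻¹ *ᵥ xv)
          - (Acl k *ᵥ xv + Ecl k *ᵥ wv) ⬝ᵥ ((P (k + 1))⁻¹ *ᵥ (Acl k *ᵥ xv + Ecl k *ᵥ wv)) := by
    intro k hk
    exact dual_step (Acl k) (Ecl k) (Ccl k) (Dcl k) (Qp k) (Sp k) (Rp k)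
      (Qpt k) (Spt k) (Rpt k) (hQpSymm k) (hRpSymm k) (hQptND k) (hinv k)
      (P k) (P (k + 1)) (hP k (le_of_lt hk)) (hP (k + 1) hk) (hQMI k hk)
  choose! εf hεpos hεineq using key
  classical
  set F : Finset ℝ := insert 1 ((Finset.range N).image εf) with hF
  have hFne : F.Nonempty := ⟨1, by simp [hF]⟩
  set ε := F.min' hFne with hεdef
  have hε0 : 0 < ε := by
    have hall : ∀ r ∈ F, 0 < r := by
      intro r hr
      rw [hF] at hr
      rcases Finset.mem_insert.mp hr with h | h
      · rw [h]; exact one_pos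
      · obtain ⟨k, hk, rfl⟩ := Finset.mem_image.mp h
        exact hεpos k (Finset.mem_range.mp hk)
    exact hall ε (F.min'_mem hFne)
  refine ⟨ε, hε0, fun w x z hx0 hdyn hout => ?_⟩
  have hstep : ∀ k, k < N →
      (Sum.elim (w k) (z k)) ⬝ᵥ
          ((fromBlocks (Qp k) (Sp k) ((Sp k)ᵀ) (Rp k)) *ᵥ (Sum.elim (w k) (z k)))
          + ε * (w k ⬝ᵥ w k)
        ≤ x k ⬝ᵥ ((P k)⁻¹ *ᵥ x k) - x (k + 1) ⬝ᵥ ((P (k + 1))⁻¹ *ᵥ x (k + 1)) := by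
    intro k hk
    have h1 := hεineq k hk (x k) (w k)
    rw [← hdyn k hk, ← hout k hk] at h1
    have h2 : ε ≤ εf k := by
      apply Finset.min'_le
      rw [hF]
      exact Finset.mem_insert_of_mem (Finset.mem_image_of_mem εf (Finset.mem_range.mpr hk))
    have h3 : ε * (w k ⬝ᵥ w k) ≤ εf k * (w k ⬝ᵥ w k) :=
      mul_le_mul_of_nonneg_right h2 (dot_self_nonneg _)
    linarith
  have hsum : (∑ k ∈ Finset.range N,
        ((Sum.elim (w k) (z k)) ⬝ᵥ
          ((fromBlocks (Qp k) (Sp k) ((Sp k)ᵀ) (Rp k)) *ᵥ (Sum.elim (w k) (z k)))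
          + ε * (w k ⬝ᵥ w k)))
      ≤ x 0 ⬝ᵥ ((P 0)⁻¹ *ᵥ x 0) - x N ⬝ᵥ ((P N)⁻¹ *ᵥ x N) := by
    rw [← Finset.sum_range_sub' (fun k => x k ⬝ᵥ ((P k)⁻¹ *ᵥ x k)) N]
    apply Finset.sum_le_sum
    intro k hk
    exact hstep k (Finset.mem_range.mp hk)
  have hV0 : x 0 ⬝ᵥ ((P 0)⁻¹ *ᵥ x 0) = 0 := by rw [hx0]; simp
  have hzf : (CN *ᵥ x N) ⬝ᵥ (CN *ᵥ x N) ≤ x N ⬝ᵥ ((P N)⁻¹ *ᵥ x N) :=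
    final_bound CN (P N) (hP N le_rfl) hfinal (x N)
  rw [Finset.sum_add_distrib, ← Finset.mul_sum] at hsum
  rw [hV0] at hsum
  linarith
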